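/- Let X₁, …, X_d be independent real random variables with X_j ∈ 𝓛¹_{α_j} (i.e., P(|X_j| > x) = x^{−α_j}·ℓ_j(x) with ℓ_j slowly varying). Let g : ℝᵈ → ℝ be globally Lipschitz and suppose there exist an index j*, constants R > 0, c > 0 and r₀ such that |g(x)| ≥ c|x_{j*}| whenever max_{k ≠ j*}|x_k| ≤ R and |x_{j*}| ≥ r₀. Then limsup_{t→∞} (−log P(|g(X)| > t))/(log t) ≤ α_{j*}. -/

import Mathlib

open Filter MeasureTheory Real

/-- A function is slowly varying at infinity if `ℓ (c*x) / ℓ x → 1` for every `c > 0`. -/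
def SlowlyVarying (ℓ : ℝ → ℝ) : Prop :=
  ∀ c : ℝ, 0 < c → Tendsto (fun x => ℓ (c * x) / ℓ x) atTop (nhds 1)

/-- Positivity of a regularly varying tail. -/
lemma tail_pos_aux (p ℓ : ℝ → ℝ) (α : ℝ)
    (hmono : ∀ ⦃x y : ℝ⦄, 0 < x → x ≤ y → p y ≤ p x)
    (hnn : ∀ x, 0 ≤ p x)
    (hform : ∀ x, 0 < x → p x = x ^ (-α) * ℓ x)
    (hsv : SlowlyVarying ℓ) : ∀ x, 0 < x → 0 < p x := by
  intro x hx
  rcases lt_or_ge 0 (p x) with h | h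
  · exact h
  exfalso
  have hpx : p x = 0 := le_antisymm h (hnn x)
  have hl0 : ∀ y, x ≤ y → ℓ y = 0 := by
    intro y hy
    have hy0 : 0 < y := lt_of_lt_of_le hx hy
    have : p y = 0 := le_antisymm (hpx ▸ hmono hx hy) (hnn y)
    have := (hform y hy0).symm.trans this
    rcases mul_eq_zero.mp this with h' | h'
    · exact absurd h' (ne_of_gt (rpow_pos_of_pos hy0 _))
    · exact h'
  have h1 : Tendsto (fun y => ℓ (1 * y) / ℓ y) atTop (nhds 1) := hsv 1 one_pos
  have h0 : Tendsto (fun y => ℓ (1 * y) / ℓ y) atTop (nhds 0) := by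
    refine Tendsto.congr' ?_ tendsto_const_nhds
    filter_upwards [eventually_ge_atTop x] with y hy
    rw [one_mul, hl0 y hy, div_zero]
  exact zero_ne_one (tendsto_nhds_unique h0 h1)
lemma tail_poly_lb (p ℓ : ℝ → ℝ) (α : ℝ) (hα : 0 < α)
    (hmono : ∀ ⦃x y : ℝ⦄, 0 < x → x ≤ y → p y ≤ p x)
    (hpos : ∀ x, 0 < x → 0 < p x)
    (hform : ∀ x, 0 < x → p x = x ^ (-α) * ℓ x)
    (hsv : SlowlyVarying ℓ) (ε : ℝ) (hε : 0 < ε) :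
    ∃ K > 0, ∃ x₀ ≥ 1, ∀ s, x₀ ≤ s → K * s ^ (-(α + ε)) ≤ p s := by
  set β := α + ε with hβdef
  have hβ : 0 < β := by positivity
  -- the doubling step
  have hlpos : ∀ x, 0 < x → 0 < ℓ x := by
    intro x hx
    have := hpos x hx
    rw [hform x hx] at this
    nlinarith [rpow_pos_of_pos hx (-α)]
  have hratio : Tendsto (fun x => ℓ (2 * x) / ℓ x) atTop (nhds 1) := hsv 2 two_pos
  have h2ε : (2:ℝ) ^ (-ε) < 1 := by
    apply rpow_lt_one_of_one_lt_of_neg one_lt_two (by linarith)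
  have hstep : ∀ᶠ x in atTop, (2:ℝ) ^ (-β) * p x ≤ p (2 * x) := by
    have hev : ∀ᶠ x in atTop, (2:ℝ) ^ (-ε) ≤ ℓ (2 * x) / ℓ x :=
      hratio.eventually_const_le h2ε
    filter_upwards [hev, eventually_gt_atTop 0] with x hx hx0
    have h2x : (0:ℝ) < 2 * x := by linarith
    have hlx := hlpos x hx0
    have h1 : (2:ℝ) ^ (-ε) * ℓ x ≤ ℓ (2 * x) :=
      (le_div_iff₀ hlx).mp hx
    rw [hform x hx0, hform (2*x) h2x, mul_rpow (by norm_num) hx0.le]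
    calc (2:ℝ) ^ (-β) * (x ^ (-α) * ℓ x)
        = (2:ℝ) ^ (-α) * (x ^ (-α) * ((2:ℝ) ^ (-ε) * ℓ x)) := by
          rw [hβdef, neg_add, rpow_add two_pos]; ring
      _ ≤ (2:ℝ) ^ (-α) * (x ^ (-α) * ℓ (2*x)) := by
          have h2a : (0:ℝ) ≤ (2:ℝ) ^ (-α) := (rpow_pos_of_pos two_pos _).le
          have hxa : (0:ℝ) ≤ x ^ (-α) := (rpow_pos_of_pos hx0 _).le
          exact mul_le_mul_of_nonneg_left (mul_le_mul_of_nonneg_left h1 hxa) h2a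
      _ = (2:ℝ) ^ (-α) * x ^ (-α) * ℓ (2*x) := by ring
  obtain ⟨x₁, hx₁⟩ := hstep.exists_forall_of_atTop
  set x₀ := max x₁ 1 with hx₀def
  have hx₀1 : (1:ℝ) ≤ x₀ := le_max_right _ _
  have hx₀0 : (0:ℝ) < x₀ := lt_of_lt_of_le one_pos hx₀1
  have hdbl : ∀ x, x₀ ≤ x → (2:ℝ) ^ (-β) * p x ≤ p (2 * x) := fun x hx =>
    hx₁ x (le_trans (le_max_left _ _) hx)
  -- induction
  have hiter : ∀ n : ℕ, (2:ℝ) ^ (-β * n) * p x₀ ≤ p (2 ^ n * x₀) := by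
    intro n
    induction n with
    | zero => simp
    | succ n ih =>
      have h2n : (1:ℝ) ≤ 2 ^ n := one_le_pow₀ (by norm_num)
      have hxn : x₀ ≤ 2 ^ n * x₀ := le_mul_of_one_le_left hx₀0.le h2n
      have h1 : (2:ℝ) ^ (-β) * p (2 ^ n * x₀) ≤ p (2 * (2 ^ n * x₀)) := hdbl _ hxn
      have h2 : (2:ℝ) ^ (-β) * ((2:ℝ) ^ (-β * n) * p x₀) ≤ (2:ℝ) ^ (-β) * p (2 ^ n * x₀) := by
        have := rpow_pos_of_pos (two_pos (α := ℝ)) (-β)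
        nlinarith
      have heq : (2:ℝ) ^ (-β * (n+1:ℕ)) = (2:ℝ) ^ (-β) * (2:ℝ) ^ (-β * n) := by
        rw [← rpow_add two_pos]; push_cast; ring_nf
      calc (2:ℝ) ^ (-β * (n+1:ℕ)) * p x₀
          = (2:ℝ) ^ (-β) * ((2:ℝ) ^ (-β * n) * p x₀) := by rw [heq]; ring
        _ ≤ (2:ℝ) ^ (-β) * p (2 ^ n * x₀) := h2
        _ ≤ p (2 * (2 ^ n * x₀)) := h1
        _ = p (2 ^ (n+1) * x₀) := by ring_nf
  have hpx₀ : 0 < p x₀ := hpos _ hx₀0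
  refine ⟨(2:ℝ) ^ (-β) * x₀ ^ β * p x₀,
    mul_pos (mul_pos (rpow_pos_of_pos two_pos _) (rpow_pos_of_pos hx₀0 _)) hpx₀,
    x₀, hx₀1, ?_⟩
  intro s hs
  have hs0 : 0 < s := lt_of_lt_of_le hx₀0 hs
  -- find n with 2^n ≤ s/x₀ < 2^(n+1)
  have hdiv1 : (1:ℝ) ≤ s / x₀ := (one_le_div hx₀0).mpr hs
  set m := ⌊s / x₀⌋₊ with hm
  have hm1 : 1 ≤ m := Nat.one_le_iff_ne_zero.mpr (by
    simp only [hm, ne_eq, Nat.floor_eq_zero, not_lt]; exact hdiv1)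
  set n := Nat.log 2 m with hn
  have hlow : (2:ℝ) ^ n ≤ s / x₀ := by
    calc (2:ℝ) ^ n ≤ (m:ℝ) := by
          exact_mod_cast Nat.pow_log_le_self 2 (by omega)
      _ ≤ s / x₀ := Nat.floor_le (by positivity)
  have hhigh : s / x₀ < (2:ℝ) ^ (n+1) := by
    have h1 : s / x₀ < (m:ℝ) + 1 := Nat.lt_floor_add_one _
    have h2 : m + 1 ≤ 2 ^ (n+1) := Nat.lt_pow_succ_log_self (by norm_num) m
    calc s / x₀ < (m:ℝ) + 1 := h1
      _ ≤ (2:ℝ) ^ (n+1) := by exact_mod_cast h2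
  have hsle : s ≤ 2 ^ (n+1) * x₀ := by
    rw [div_lt_iff₀ hx₀0] at hhigh; linarith
  have h1 : p (2 ^ (n+1) * x₀) ≤ p s := hmono hs0 hsle
  have h2 := hiter (n+1)
  -- 2^{-β n} ≥ (s/x₀)^{-β}
  have h3 : (s / x₀) ^ (-β) ≤ (2:ℝ) ^ (-β * n) := by
    have hb : (s / x₀) ^ (-β) ≤ ((2:ℝ) ^ n) ^ (-β) :=
      rpow_le_rpow_of_nonpos (by positivity) hlow (by linarith)
    calc (s / x₀) ^ (-β) ≤ ((2:ℝ) ^ n) ^ (-β) := hb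
      _ = (2:ℝ) ^ (-β * n) := by
          rw [← rpow_natCast 2 n, ← rpow_mul (by norm_num)]
          ring_nf
  have h4 : (s / x₀) ^ (-β) = s ^ (-β) * x₀ ^ β := by
    rw [div_rpow hs0.le hx₀0.le, rpow_neg hx₀0.le]; field_simp
  calc (2:ℝ) ^ (-β) * x₀ ^ β * p x₀ * s ^ (-β)
      = (2:ℝ) ^ (-β) * ((s/x₀) ^ (-β)) * p x₀ := by rw [h4]; ring
    _ ≤ (2:ℝ) ^ (-β) * ((2:ℝ) ^ (-β * n)) * p x₀ := by
        have h2b : (0:ℝ) ≤ (2:ℝ) ^ (-β) := (rpow_pos_of_pos two_pos _).le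
        exact mul_le_mul_of_nonneg_right (mul_le_mul_of_nonneg_left h3 h2b) hpx₀.le
    _ = (2:ℝ) ^ (-β * (n+1:ℕ)) * p x₀ := by
        rw [← rpow_add two_pos]; push_cast; ring_nf
    _ ≤ p (2 ^ (n+1) * x₀) := hiter (n+1)
    _ ≤ p s := h1


/-- tail dominance, lower bound on the tail: if some coordinate `j*` with
regularly varying tail of index `α_{j*}` influences `g` linearly, then
`limsup (-log P(|g(X)| > t)) / log t ≤ α_{j*}`. -/
theorem tail_dominance_limsup
    {Ω : Type*} [MeasureSpace Ω] (μ : Measure Ω) [IsProbabilityMeasure μ]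
    (d : ℕ) (X : Fin d → Ω → ℝ) (hXmeas : ∀ j, Measurable (X j))
    (hindep : ProbabilityTheory.iIndepFun X μ)
    (α : Fin d → ℝ) (hα : ∀ j, 0 < α j)
    (ℓ : Fin d → ℝ → ℝ) (hℓ : ∀ j, SlowlyVarying (ℓ j))
    (htail : ∀ j, ∀ x : ℝ, 0 < x →
      (μ {ω | x < |X j ω|}).toReal = x ^ (-(α j)) * ℓ j x)
    (g : (Fin d → ℝ) → ℝ) (Lg : ℝ) (hLg : 0 < Lg)
    (hgLip : ∀ x y : Fin d → ℝ, |g x - g y| ≤ Lg * ∑ k, |x k - y k|)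
    (jstar : Fin d) (R c r₀ : ℝ) (hR : 0 < R) (hc : 0 < c)
    (hinfl : ∀ x : Fin d → ℝ,
      (∀ k, k ≠ jstar → |x k| ≤ R) → r₀ ≤ |x jstar| → c * |x jstar| ≤ |g x|) :
    limsup (fun t =>
        (-Real.log ((μ {ω | t < |g (fun j => X j ω)|}).toReal)) / Real.log t) atTop
      ≤ α jstar := by
  classical
  -- the tail function of the dominant coordinate
  set p : ℝ → ℝ := fun x => (μ {ω | x < |X jstar ω|}).toReal with hp
  have hmono : ∀ ⦃x y : ℝ⦄, 0 < x → x ≤ y → p y ≤ p x := by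
    intro x y hx hxy
    exact ENNReal.toReal_mono (measure_ne_top μ _)
      (measure_mono (fun ω h => lt_of_le_of_lt hxy h))
  have hnn : ∀ x, 0 ≤ p x := fun x => ENNReal.toReal_nonneg
  have hppos : ∀ x, 0 < x → 0 < p x :=
    tail_pos_aux p (ℓ jstar) (α jstar) hmono hnn (fun x hx => htail jstar x hx) (hℓ jstar)
  -- choose a level M so that every coordinate is ≤ M with positive probability
  have hMex : ∀ j : Fin d, ∃ n : ℕ, 0 < μ {ω | |X j ω| ≤ (n:ℝ)} := by
    intro j
    by_contra h
    push_neg at h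
    have h0 : ∀ n : ℕ, μ {ω | |X j ω| ≤ (n:ℝ)} = 0 := fun n => le_antisymm (h n) (zero_le)
    have hnull : μ (⋃ n : ℕ, {ω | |X j ω| ≤ (n:ℝ)}) = 0 := measure_iUnion_null h0
    have huniv : (⋃ n : ℕ, {ω | |X j ω| ≤ (n:ℝ)}) = Set.univ := by
      ext ω
      simp only [Set.mem_iUnion, Set.mem_univ, iff_true, Set.mem_setOf_eq]
      exact exists_nat_ge (|X j ω|)
    rw [huniv, measure_univ] at hnull
    exact one_ne_zero hnull
  choose N hN using hMex
  set M : ℝ := ((Finset.univ.sup N : ℕ) : ℝ) with hMdef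
  have hM0 : 0 ≤ M := Nat.cast_nonneg _
  have hq : ∀ j, 0 < (μ {ω | |X j ω| ≤ M}).toReal := by
    intro j
    refine ENNReal.toReal_pos (fun h0 => ?_) (measure_ne_top μ _)
    refine (hN j).ne' (measure_mono_null ?_ h0)
    intro ω hω
    simp only [Set.mem_setOf_eq] at hω ⊢
    exact le_trans hω (Nat.cast_le.mpr (Finset.le_sup (Finset.mem_univ j)))
  -- Q : probability that all other coordinates are ≤ M
  set Q : ℝ := ∏ k ∈ Finset.univ.erase jstar, (μ {ω | |X k ω| ≤ M}).toReal with hQdef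
  have hQ0 : 0 < Q := Finset.prod_pos (fun k _ => hq k)
  set C : ℝ := Lg * d * M with hCdef
  have hC0 : 0 ≤ C := by positivity
  -- key inequality
  have key : ∀ s : ℝ, r₀ ≤ s → 0 < s →
      Q * p s ≤ (μ {ω | c * s - C < |g (fun j => X j ω)|}).toReal := by
    intro s hr₀s hs0
    set B : Fin d → Set ℝ := fun k =>
      if k = jstar then {y : ℝ | s < |y|} else {y : ℝ | |y| ≤ M} with hBdef
    have hBmeas : ∀ k, MeasurableSet (B k) := by
      intro k
      by_cases hk : k = jstar
      · simp only [hBdef, hk, if_pos]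
        exact measurableSet_lt measurable_const measurable_abs
      · simp only [hBdef, hk, if_neg, if_false]
        exact measurableSet_le measurable_abs measurable_const
    have hprod : μ (⋂ k, X k ⁻¹' B k) = ∏ k, μ (X k ⁻¹' B k) :=
      hindep.meas_iInter (fun k => ⟨B k, hBmeas k, rfl⟩)
    have hsub : (⋂ k, X k ⁻¹' B k) ⊆ {ω | c * s - C < |g (fun j => X j ω)|} := by
      intro ω hω
      simp only [Set.mem_iInter, Set.mem_preimage] at hω
      have hj : s < |X jstar ω| := by
        have := hω jstar
        simpa only [hBdef, if_pos rfl, Set.mem_setOf_eq] using this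
      have hk : ∀ k, k ≠ jstar → |X k ω| ≤ M := by
        intro k hkj
        have := hω k
        simpa only [hBdef, if_neg hkj, Set.mem_setOf_eq] using this
      set y : Fin d → ℝ := fun k => if k = jstar then X jstar ω else 0 with hy
      have hyj : y jstar = X jstar ω := if_pos rfl
      have hgy : c * |X jstar ω| ≤ |g y| := by
        rw [← hyj]
        refine hinfl y (fun k hkj => ?_) ?_
        · simp only [hy, if_neg hkj, abs_zero]; exact hR.le
        · rw [hyj]; exact le_trans hr₀s (le_of_lt hj)
      have hdist : |g (fun j => X j ω) - g y| ≤ C := by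
        refine le_trans (hgLip _ _) ?_
        rw [hCdef]
        have hsum : ∑ k, |X k ω - y k| ≤ ∑ _k : Fin d, M := by
          refine Finset.sum_le_sum (fun k _ => ?_)
          by_cases hkj : k = jstar
          · subst hkj; rw [hyj]; simpa using hM0
          · simp only [hy, if_neg hkj, sub_zero]; exact hk k hkj
        have : (∑ _k : Fin d, M) = d * M := by
          rw [Finset.sum_const, Finset.card_univ, Fintype.card_fin, nsmul_eq_mul]
        rw [mul_assoc]
        refine mul_le_mul_of_nonneg_left (le_trans hsum (le_of_eq this)) hLg.le
      have : c * s - C < |g (fun j => X j ω)| := by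
        have h1 : |g y| - |g (fun j => X j ω)| ≤ C := by
          have := abs_sub_abs_le_abs_sub (g y) (g (fun j => X j ω))
          rw [abs_sub_comm] at this
          linarith [hdist, this]
        have h2 : c * s < c * |X jstar ω| := by
          exact (mul_lt_mul_iff_right₀ hc).mpr hj
        linarith
      exact this
    have hmeas_le : μ (⋂ k, X k ⁻¹' B k) ≤ μ {ω | c * s - C < |g (fun j => X j ω)|} :=
      measure_mono hsub
    have htoReal : (μ (⋂ k, X k ⁻¹' B k)).toReal = p s * Q := by
      rw [hprod, ENNReal.toReal_prod]
      rw [← Finset.mul_prod_erase Finset.univ _ (Finset.mem_univ jstar)]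
      congr 1
      · congr 1
        simp only [hBdef, if_pos rfl]
        rfl
      · refine Finset.prod_congr rfl (fun k hk => ?_)
        have hkj : k ≠ jstar := Finset.ne_of_mem_erase hk
        congr 1
        simp only [hBdef, if_neg hkj]
        rfl
    calc Q * p s = p s * Q := mul_comm _ _
      _ = (μ (⋂ k, X k ⁻¹' B k)).toReal := htoReal.symm
      _ ≤ (μ {ω | c * s - C < |g (fun j => X j ω)|}).toReal :=
          ENNReal.toReal_mono (measure_ne_top μ _) hmeas_le
  -- now the limsup estimate
  set F : ℝ → ℝ := fun t =>
    (-Real.log ((μ {ω | t < |g (fun j => X j ω)|}).toReal)) / Real.log t with hF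
  have hFnn : ∀ᶠ t in atTop, 0 ≤ F t := by
    filter_upwards [eventually_gt_atTop 1] with t ht
    have hlogt : 0 < Real.log t := Real.log_pos ht
    refine div_nonneg ?_ hlogt.le
    rw [neg_nonneg]
    refine Real.log_nonpos ENNReal.toReal_nonneg ?_
    calc (μ {ω | t < |g (fun j => X j ω)|}).toReal
        ≤ (1 : ENNReal).toReal := ENNReal.toReal_mono ENNReal.one_ne_top prob_le_one
      _ = 1 := ENNReal.toReal_one
  have hcob : IsCoboundedUnder (· ≤ ·) atTop F :=
    IsBoundedUnder.isCoboundedUnder_le ⟨0, by simpa using hFnn⟩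
  have main : ∀ ε : ℝ, 0 < ε → limsup F atTop ≤ α jstar + ε := by
    intro ε hε
    obtain ⟨K, hK0, x₀, hx₀1, hlb⟩ :=
      tail_poly_lb p (ℓ jstar) (α jstar) (hα jstar) hmono hppos
        (fun x hx => htail jstar x hx) (hℓ jstar) (ε/2) (by linarith)
    set β : ℝ := α jstar + ε/2 with hβdef
    have hβ0 : 0 < β := by rw [hβdef]; have := hα jstar; linarith
    set A : ℝ := β * Real.log (2 / c) - Real.log Q - Real.log K with hAdef
    have hst : Tendsto (fun t : ℝ => (t + C) / c) atTop atTop :=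
      (tendsto_atTop_add_const_right _ C tendsto_id).atTop_div_const hc
    have hA0 : Tendsto (fun t : ℝ => A / Real.log t) atTop (nhds 0) := by
      have h1 : Tendsto (fun t : ℝ => (Real.log t)⁻¹) atTop (nhds 0) :=
        Real.tendsto_log_atTop.inv_tendsto_atTop
      have := h1.const_mul A
      simpa [div_eq_mul_inv] using this
    have hev : ∀ᶠ t in atTop, F t ≤ α jstar + ε := by
      filter_upwards [eventually_gt_atTop 1, eventually_ge_atTop C,
        hst.eventually_ge_atTop (max x₀ r₀),
        hA0.eventually_le_const (by linarith : (0:ℝ) < ε/2)] with t ht1 htC hts hA2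
      set s : ℝ := (t + C) / c with hsdef
      have hsx₀ : x₀ ≤ s := le_trans (le_max_left _ _) hts
      have hsr₀ : r₀ ≤ s := le_trans (le_max_right _ _) hts
      have hs0 : 0 < s := lt_of_lt_of_le (lt_of_lt_of_le one_pos hx₀1) hsx₀
      have ht0 : 0 < t := lt_trans one_pos ht1
      have hlogt : 0 < Real.log t := Real.log_pos ht1
      have hcs : c * s - C = t := by
        rw [hsdef]; field_simp; ring
      have hkey := key s hsr₀ hs0
      rw [hcs] at hkey
      have hlb' : K * s ^ (-β) ≤ p s := hlb s hsx₀
      have hQK : Q * (K * s ^ (-β)) ≤ (μ {ω | t < |g (fun j => X j ω)|}).toReal :=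
        le_trans (mul_le_mul_of_nonneg_left hlb' hQ0.le) hkey
      have hQKpos : 0 < Q * (K * s ^ (-β)) :=
        mul_pos hQ0 (mul_pos hK0 (rpow_pos_of_pos hs0 _))
      have hPt0 : 0 < (μ {ω | t < |g (fun j => X j ω)|}).toReal :=
        lt_of_lt_of_le hQKpos hQK
      have hlog1 : Real.log (Q * (K * s ^ (-β)))
          ≤ Real.log ((μ {ω | t < |g (fun j => X j ω)|}).toReal) :=
        Real.log_le_log hQKpos hQK
      have hlog2 : Real.log (Q * (K * s ^ (-β)))
          = Real.log Q + Real.log K + (-β) * Real.log s := by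
        rw [Real.log_mul hQ0.ne' (mul_pos hK0 (rpow_pos_of_pos hs0 _)).ne',
          Real.log_mul hK0.ne' (rpow_pos_of_pos hs0 _).ne', Real.log_rpow hs0]
        ring
      have hslog : Real.log s ≤ Real.log (2 / c) + Real.log t := by
        have hs2t : s ≤ (2 / c) * t := by
          rw [hsdef, div_mul_eq_mul_div, div_le_div_iff_of_pos_right hc]
          linarith
        calc Real.log s ≤ Real.log ((2 / c) * t) := Real.log_le_log hs0 hs2t
          _ = Real.log (2 / c) + Real.log t := Real.log_mul (by positivity) ht0.ne'
      have hnum : -Real.log ((μ {ω | t < |g (fun j => X j ω)|}).toReal)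
          ≤ A + β * Real.log t := by
        have h1 : -Real.log ((μ {ω | t < |g (fun j => X j ω)|}).toReal)
            ≤ -Real.log Q - Real.log K + β * Real.log s := by
          have := hlog1
          rw [hlog2] at this
          linarith
        have h2 : β * Real.log s ≤ β * (Real.log (2 / c) + Real.log t) :=
          mul_le_mul_of_nonneg_left hslog hβ0.le
        rw [mul_add] at h2
        calc -Real.log ((μ {ω | t < |g (fun j => X j ω)|}).toReal)
            ≤ -Real.log Q - Real.log K + β * Real.log s := h1
          _ ≤ -Real.log Q - Real.log K + (β * Real.log (2 / c) + β * Real.log t) := by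
              linarith
          _ = A + β * Real.log t := by rw [hAdef]; ring
      have hdiv : F t ≤ (A + β * Real.log t) / Real.log t := by
        exact div_le_div_of_nonneg_right hnum hlogt.le
      have heq : (A + β * Real.log t) / Real.log t = A / Real.log t + β := by
        rw [add_div, mul_div_assoc, div_self hlogt.ne', mul_one]
      calc F t ≤ A / Real.log t + β := by rw [← heq]; exact hdiv
        _ ≤ ε/2 + β := by linarith
        _ = α jstar + ε := by rw [hβdef]; ring
    exact limsup_le_of_le hcob hev
  by_contra hcon
  push_neg at hcon
  have hε : 0 < (limsup F atTop - α jstar) / 2 := by linarith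
  have := main _ hε
  linarith
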